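/- Let Z be a zero-mean random element with independent components in the d-dimensional subspace M_d, finite fourth moments, and Σ(Z) = P_{M_d}, and let U be unitary on M_d. Then for each i,j, the (k,l) off-diagonal (k ≠ l) entry of E{⟨UZ,φᵢ⟩⟨UZ,φⱼ⟩(Z⊗Z)} equals (ξ_{ik} ⊗ ξ_{jl}) + (ξ_{jk} ⊗ ξ_{il}), where ξᵢ = (ξ_{i1},...,ξ_{ip}) = U*φᵢ; consequently C^{ij}(UZ) = U D^{ij} U* for a diagonal matrix of operators D^{ij}. -/

import Mathlib

open scoped RealInnerProductSpace
open MeasureTheory ProbabilityTheory ContinuousLinearMap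

set_option synthInstance.maxHeartbeats 1000000
set_option maxHeartbeats 1000000

open Filter
open scoped ENNReal

section helpers
variable {Ω : Type*} [MeasurableSpace Ω] {μ : Measure Ω}

lemma my_iIndepFun_ae_eq {ι : Type*} {β : ι → Type*} [m : ∀ i, MeasurableSpace (β i)]
    {f g : ∀ i, Ω → β i} (hf : iIndepFun f μ) (h : ∀ i, f i =ᵐ[μ] g i) :
    iIndepFun g μ := by
  classical
  rw [iIndepFun_iff_measure_inter_preimage_eq_mul] at hf ⊢
  intro S sets hsets
  have hpre : ∀ i : ι, (f i ⁻¹' sets i : Set Ω) =ᵐ[μ] (g i ⁻¹' sets i) :=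
    fun i => (h i).fun_comp (sets i)
  have hint : ∀ S : Finset ι,
      ((⋂ i ∈ S, f i ⁻¹' sets i : Set Ω) =ᵐ[μ] (⋂ i ∈ S, g i ⁻¹' sets i)) := by
    intro S
    induction S using Finset.induction_on with
    | empty => simp
    | insert _ _ ha ih =>
        simp only [Finset.set_biInter_insert]
        exact (hpre _).inter ih
  rw [← measure_congr (hint S), hf S hsets]
  exact Finset.prod_congr rfl fun i _ => measure_congr (hpre i)

lemma my_integral_prod {ι : Type*} [IsProbabilityMeasure μ] {G : ι → Ω → ℝ}
    (h : iIndepFun G μ) (hm : ∀ t, Measurable (G t))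
    (s : Finset ι) :
    ∫ ω, ∏ t ∈ s, G t ω ∂μ = ∏ t ∈ s, ∫ ω, G t ω ∂μ := by
  classical
  induction s using Finset.induction_on with
  | empty => simp
  | insert a s ha ih =>
      simp only [Finset.prod_insert ha]
      have hi : IndepFun (G a) (∏ t ∈ s, G t) μ :=
        (h.indepFun_finset_prod_of_notMem hm ha).symm
      have hsm : AEStronglyMeasurable (∏ t ∈ s, G t) μ := by
        rw [Finset.prod_fn]
        exact (s.measurable_prod (fun t _ => hm t)).aestronglyMeasurable
      have h2 := hi.integral_mul_eq_mul_integral (hm a).aestronglyMeasurable hsm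
      have heq : ∫ ω, G a ω * ∏ t ∈ s, G t ω ∂μ
          = (∫ ω, G a ω ∂μ) * ∫ ω, ∏ t ∈ s, G t ω ∂μ := by
        simpa [Pi.mul_apply, Finset.prod_fn, integral] using h2
      rw [heq, ih]

lemma prod_pair_of_eq_one {β : Type*} [CommMonoid β] {ι : Type*} [Fintype ι] [DecidableEq ι]
    {k l : ι} (hkl : k ≠ l) (f : ι → β) (h : ∀ t, t ≠ k → t ≠ l → f t = 1) :
    ∏ t, f t = f k * f l := by
  rw [← Finset.mul_prod_erase Finset.univ f (Finset.mem_univ k),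
    ← Finset.mul_prod_erase _ f (Finset.mem_erase.2 ⟨hkl.symm, Finset.mem_univ l⟩),
    Finset.prod_eq_one, mul_one]
  intro t ht
  simp only [Finset.mem_erase] at ht
  exact h t ht.2.1 ht.1

lemma my_sum_sum_ite {ι : Type*} [Fintype ι] [DecidableEq ι] (a b : ι) (V : ℝ) :
    (∑ r : ι, ∑ s : ι, if r = a ∧ s = b then V else 0) = V := by
  classical
  have h1 : ∀ r : ι, (∑ s : ι, if r = a ∧ s = b then V else 0)
      = if r = a then V else 0 := by
    intro r
    by_cases h : r = a
    · simp [h, Finset.sum_ite_eq', Finset.sum_ite_eq]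
    · simp [h]
  rw [Finset.sum_congr rfl fun r _ => h1 r]
  simp [Finset.sum_ite_eq', Finset.sum_ite_eq]

end helpers

section pilp
variable {p : ℕ} {H : Fin p → Type*}
    [∀ k, NormedAddCommGroup (H k)] [∀ k, InnerProductSpace ℝ (H k)]

/-- the canonical injection into the `t`-th component -/
noncomputable abbrev esingle (t : Fin p) (v : H t) : PiLp 2 H :=
  (WithLp.equiv 2 (∀ r, H r)).symm (Pi.single t v)

lemma my_inner_single (t : Fin p) (v : H t) (y : PiLp 2 H) :
    ⟪esingle t v, y⟫ = ⟪v, y t⟫ := by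
  classical
  rw [PiLp.inner_apply, Finset.sum_eq_single t]
  · simp
  · intro b _ hb
    simp [Pi.single_eq_of_ne hb]
  · simp

lemma my_inner_single' (t : Fin p) (v : H t) (y : PiLp 2 H) :
    ⟪y, esingle t v⟫ = ⟪y t, v⟫ := by
  rw [real_inner_comm, my_inner_single, real_inner_comm]

lemma my_norm_apply_le (x : PiLp 2 H) (t : Fin p) : ‖x t‖ ≤ ‖x‖ := by
  have hx : ‖x‖ = Real.sqrt (∑ r, ‖x r‖ ^ 2) := by
    rw [PiLp.norm_eq_of_L2]
  rw [hx, show ‖x t‖ = Real.sqrt (‖x t‖ ^ 2) by rw [Real.sqrt_sq (norm_nonneg _)]]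
  apply Real.sqrt_le_sqrt
  exact Finset.single_le_sum (f := fun r => ‖x r‖ ^ 2) (fun r _ => by positivity)
    (Finset.mem_univ t)

end pilp

section termeval
variable {p : ℕ} {H : Fin p → Type*}
    [∀ k, NormedAddCommGroup (H k)] [∀ k, InnerProductSpace ℝ (H k)]
    [∀ k, MeasurableSpace (H k)] [∀ k, BorelSpace (H k)]
    {Ω : Type*} [MeasurableSpace Ω] {μ : Measure Ω} [IsProbabilityMeasure μ]

/-- evaluation of a single term in the fourth-moment expansion -/
lemma term_eval (Z' : Ω → PiLp 2 H)
    (hcomp : ∀ t, Measurable fun ω => Z' ω t)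
    (hindep' : iIndepFun (fun t ω => Z' ω t) μ)
    (hmean_c : ∀ (t : Fin p) (v : H t), ∫ ω, ⟪Z' ω t, v⟫ ∂μ = 0)
    {k l : Fin p} (hkl : k ≠ l) (f : H k) (g : H l)
    (wi wj : PiLp 2 H) (r s : Fin p) :
    ∫ ω, ⟪Z' ω r, wi r⟫ * ⟪Z' ω s, wj s⟫ * (⟪Z' ω k, f⟫ * ⟪Z' ω l, g⟫) ∂μ
      = (if r = k ∧ s = l then
          (∫ ω, ⟪Z' ω k, wi k⟫ * ⟪Z' ω k, f⟫ ∂μ) *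
            (∫ ω, ⟪Z' ω l, wj l⟫ * ⟪Z' ω l, g⟫ ∂μ) else 0)
        + (if r = l ∧ s = k then
          (∫ ω, ⟪Z' ω l, wi l⟫ * ⟪Z' ω l, g⟫ ∂μ) *
            (∫ ω, ⟪Z' ω k, wj k⟫ * ⟪Z' ω k, f⟫ ∂μ) else 0) := by
  classical
  have hin : ∀ (t : Fin p) (w : H t), Measurable fun x : H t => ⟪x, w⟫ :=
    fun t w => (continuous_id.inner continuous_const).measurable
  have hinite : ∀ (t : Fin p) (c : Prop) [Decidable c] (w : H t),
      Measurable fun x : H t => if c then ⟪x, w⟫ else 1 := by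
    intro t c _ w
    by_cases h : c <;> simp [h]
    · exact hin t w
  set gf : ∀ t : Fin p, H t → ℝ := fun t x =>
    (if t = r then ⟪x, wi t⟫ else 1) * ((if t = s then ⟪x, wj t⟫ else 1) *
      ((if t = k then ⟪x, Pi.single k f t⟫ else 1) *
        (if t = l then ⟪x, Pi.single l g t⟫ else 1))) with hgf
  have hgm : ∀ t, Measurable (gf t) := fun t =>
    ((hinite t _ _).mul ((hinite t _ _).mul ((hinite t _ _).mul (hinite t _ _))))
  have hGm : ∀ t, Measurable fun ω => gf t (Z' ω t) := fun t => (hgm t).comp (hcomp t)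
  have hGindep : iIndepFun (fun t ω => gf t (Z' ω t)) μ :=
    hindep'.comp gf hgm
  have hps : ∀ ω, ⟪Z' ω r, wi r⟫ * ⟪Z' ω s, wj s⟫ * (⟪Z' ω k, f⟫ * ⟪Z' ω l, g⟫)
      = ∏ t, gf t (Z' ω t) := by
    intro ω
    rw [hgf]
    simp only [Finset.prod_mul_distrib]
    rw [Finset.prod_ite_eq' Finset.univ r (fun t => ⟪Z' ω t, wi t⟫),
      Finset.prod_ite_eq' Finset.univ s (fun t => ⟪Z' ω t, wj t⟫),
      Finset.prod_ite_eq' Finset.univ k (fun t => ⟪Z' ω t, Pi.single k f t⟫),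
      Finset.prod_ite_eq' Finset.univ l (fun t => ⟪Z' ω t, Pi.single l g t⟫)]
    simp [mul_assoc]
  rw [integral_congr_ae (Eventually.of_forall hps), my_integral_prod hGindep hGm]
  by_cases h1 : r = k ∧ s = l
  · obtain ⟨rfl, rfl⟩ := h1
    rw [if_pos ⟨rfl, rfl⟩, if_neg (fun h => hkl h.1), add_zero]
    rw [prod_pair_of_eq_one hkl _ (fun t ht1 ht2 => ?_)]
    · congr 1
      · refine integral_congr_ae (Eventually.of_forall fun ω => ?_)
        simp [hgf, hkl]
      · refine integral_congr_ae (Eventually.of_forall fun ω => ?_)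
        simp [hgf, hkl.symm, Ne.symm hkl]
    · have : ∫ ω, gf t (Z' ω t) ∂μ = ∫ (_ : Ω), (1:ℝ) ∂μ :=
        integral_congr_ae (Eventually.of_forall fun ω => by simp [hgf, ht1, ht2])
      simp [this]
  · by_cases h2 : r = l ∧ s = k
    · obtain ⟨rfl, rfl⟩ := h2
      rw [if_neg h1, if_pos ⟨rfl, rfl⟩, zero_add]
      rw [prod_pair_of_eq_one hkl _ (fun t ht1 ht2 => ?_)]
      · rw [mul_comm]
        congr 1
        · refine integral_congr_ae (Eventually.of_forall fun ω => ?_)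
          simp [hgf, hkl.symm, Ne.symm hkl]
        · refine integral_congr_ae (Eventually.of_forall fun ω => ?_)
          simp [hgf, hkl]
      · have : ∫ ω, gf t (Z' ω t) ∂μ = ∫ (_ : Ω), (1:ℝ) ∂μ :=
          integral_congr_ae (Eventually.of_forall fun ω => by simp [hgf, ht1, ht2])
        simp [this]
    · rw [if_neg h1, if_neg h2, add_zero]
      -- find an index whose factor has zero mean
      have main : ∃ t0, ∫ ω, gf t0 (Z' ω t0) ∂μ = 0 := by
        by_cases hrk : r = k
        · subst hrk
          have hsl : s ≠ l := fun h => h1 ⟨rfl, h⟩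
          refine ⟨l, ?_⟩
          have : ∀ ω, gf l (Z' ω l) = ⟪Z' ω l, g⟫ := by
            intro ω
            have h4 : l ≠ s := fun h => hsl h.symm
            simp [hgf, Ne.symm hkl, h4]
          rw [integral_congr_ae (Eventually.of_forall this)]
          exact hmean_c l g
        · by_cases hrl : r = l
          · subst hrl
            have hsk : s ≠ k := fun h => h2 ⟨rfl, h⟩
            refine ⟨k, ?_⟩
            have : ∀ ω, gf k (Z' ω k) = ⟪Z' ω k, f⟫ := by
              intro ω
              have h4 : k ≠ s := fun h => hsk h.symm
              simp [hgf, hkl, h4]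
            rw [integral_congr_ae (Eventually.of_forall this)]
            exact hmean_c k f
          · by_cases hsr : s = r
            · refine ⟨k, ?_⟩
              have : ∀ ω, gf k (Z' ω k) = ⟪Z' ω k, f⟫ := by
                intro ω
                have h3 : k ≠ s := fun h => hrk (hsr.symm.trans h.symm)
                simp [hgf, Ne.symm hrk, h3, hkl]
              rw [integral_congr_ae (Eventually.of_forall this)]
              exact hmean_c k f
            · refine ⟨r, ?_⟩
              have : ∀ ω, gf r (Z' ω r) = ⟪Z' ω r, wi r⟫ := by
                intro ω
                have h4 : r ≠ s := fun h => hsr h.symm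
                simp [hgf, h4, hrk, hrl]
              rw [integral_congr_ae (Eventually.of_forall this)]
              exact hmean_c r (wi r)
      obtain ⟨t0, ht0⟩ := main
      exact Finset.prod_eq_zero (Finset.mem_univ t0) ht0

end termeval

instance piLp_completeSpace {p : ℕ} (H : Fin p → Type*)
    [∀ i, UniformSpace (H i)] [∀ i, CompleteSpace (H i)] :
    CompleteSpace (PiLp 2 H) := inferInstance

/-- For a standardized zero-mean `Z` with independent components
in the `d`-dimensional subspace `M_d` and a unitary `U` on `M_d`, the `(k,l)`
off-diagonal (`k ≠ l`) entry of `E{⟨UZ,φᵢ⟩⟨UZ,φⱼ⟩(Z⊗Z)}` equals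
`(ξ_{ik} ⊗ ξ_{jl}) + (ξ_{jk} ⊗ ξ_{il})` where `ξᵢ = U*φᵢ`; consequently
`C^{ij}(UZ) = U D^{ij} U*` for a diagonal matrix of operators `D^{ij}`. -/
theorem stmt_19 {p : ℕ} (H : Fin p → Type*)
    [∀ k, NormedAddCommGroup (H k)] [∀ k, InnerProductSpace ℝ (H k)]
    [∀ k, CompleteSpace (H k)] [∀ k, TopologicalSpace.SeparableSpace (H k)]
    [∀ k, MeasurableSpace (H k)] [∀ k, BorelSpace (H k)]
    {Ω : Type*} [MeasurableSpace Ω]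
    (μ : Measure Ω) [IsProbabilityMeasure μ]
    {d : ℕ} (M : Submodule ℝ (PiLp 2 H)) [FiniteDimensional ℝ M]
    (φ : Fin d → PiLp 2 H) (hφ : Orthonormal ℝ φ)
    (hspan : Submodule.span ℝ (Set.range φ) = M)
    (P : PiLp 2 H →L[ℝ] PiLp 2 H)
    (hP : P = M.subtypeL.comp (M.orthogonalProjectionOnto))
    (Z : Ω → PiLp 2 H)
    (hZ4 : MemLp Z 4 μ) (hmean : ∫ ω, Z ω ∂μ = 0)
    (hZM : ∀ ω, Z ω ∈ M)
    -- the component functions `Z₁, ..., Zₚ` are mutually independent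
    (hindep : iIndepFun (fun k ω => Z ω k) μ)
    -- `Z` is standardized: `Σ(Z) = P_{M_d}`
    (hstd : ∀ f g : PiLp 2 H, ⟪f, P g⟫ = ∫ ω, ⟪f, Z ω⟫ * ⟪Z ω, g⟫ ∂μ)
    -- `U` is unitary on `M_d`
    (U : PiLp 2 H →L[ℝ] PiLp 2 H)
    (hUP : U.comp P = U ∧ P.comp U = U)
    (hU : U.comp (ContinuousLinearMap.adjoint U) = P ∧
      (ContinuousLinearMap.adjoint U).comp U = P)
    (i j : Fin d)
    -- `Mop = E{⟨UZ,φᵢ⟩⟨UZ,φⱼ⟩ (Z⊗Z)}`, defined weakly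
    (Mop : PiLp 2 H →L[ℝ] PiLp 2 H)
    (hMop : ∀ f g : PiLp 2 H, ⟪f, Mop g⟫
      = ∫ ω, ⟪U (Z ω), φ i⟫ * ⟪U (Z ω), φ j⟫ * (⟪Z ω, f⟫ * ⟪Z ω, g⟫) ∂μ)
    -- `MopFull = E{⟨UZ,φᵢ⟩⟨UZ,φⱼ⟩ ((UZ)⊗(UZ))}`, defined weakly
    (MopFull : PiLp 2 H →L[ℝ] PiLp 2 H)
    (hMopFull : ∀ f g : PiLp 2 H, ⟪f, MopFull g⟫
      = ∫ ω, ⟪U (Z ω), φ i⟫ * ⟪U (Z ω), φ j⟫ * (⟪U (Z ω), f⟫ * ⟪U (Z ω), g⟫) ∂μ) :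
    -- the `(k,l)` off-diagonal entry of `Mop` is `ξ_{ik} ⊗ ξ_{jl} + ξ_{jk} ⊗ ξ_{il}`
    (∀ k l : Fin p, k ≠ l → ∀ g : H l,
      Mop ((WithLp.equiv 2 (∀ r, H r)).symm (Pi.single l g)) k
        = ⟪(ContinuousLinearMap.adjoint U) (φ j) l, g⟫ •
            (ContinuousLinearMap.adjoint U) (φ i) k
          + ⟪(ContinuousLinearMap.adjoint U) (φ i) l, g⟫ •
              (ContinuousLinearMap.adjoint U) (φ j) k) ∧
    -- consequently `C^{ij}(UZ) = U D^{ij} U*` with `D^{ij}` diagonal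
    ∃ D : PiLp 2 H →L[ℝ] PiLp 2 H,
      (∀ k l : Fin p, k ≠ l → ∀ g : H l,
        D ((WithLp.equiv 2 (∀ r, H r)).symm (Pi.single l g)) k = 0) ∧
      MopFull - (if i = j then (1 : ℝ) else 0) • P
          - (innerSL ℝ (φ j)).smulRight (φ i)
          - (innerSL ℝ (φ i)).smulRight (φ j)
        = U.comp (D.comp (ContinuousLinearMap.adjoint U)) := by
  classical
  -- self-adjointness of P (from the covariance identity)
  have hPsa : ∀ x y : PiLp 2 H, ⟪P x, y⟫ = ⟪x, P y⟫ := by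
    intro x y
    rw [real_inner_comm y (P x), hstd y x, hstd x y]
    refine integral_congr_ae (Eventually.of_forall fun ω => ?_)
    beta_reduce
    rw [real_inner_comm x (Z ω), real_inner_comm (Z ω) y]
    ring
  have hPmem : ∀ x, P x ∈ M := fun x => by
    rw [hP]; exact Submodule.coe_mem _
  have hPM : ∀ x, x ∈ M → P x = x := by
    intro x hx
    rw [hP]
    exact Submodule.starProjection_eq_self_iff.mpr hx
  have hPP : ∀ x, P (P x) = P x := fun x => hPM _ (hPmem x)
  have hφM : ∀ a : Fin d, φ a ∈ M := fun a => by
    rw [← hspan]; exact Submodule.subset_span ⟨a, rfl⟩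
  have hPφ : ∀ a, P (φ a) = φ a := fun a => hPM _ (hφM a)
  have hPU : ∀ x, P (U x) = U x := fun x => DFunLike.congr_fun hUP.2 x
  have hUPa : ∀ x, U (P x) = U x := fun x => DFunLike.congr_fun hUP.1 x
  have hUUad : ∀ x, U (ContinuousLinearMap.adjoint U x) = P x :=
    fun x => DFunLike.congr_fun hU.1 x
  have hadU : ∀ x, ContinuousLinearMap.adjoint U (U x) = P x :=
    fun x => DFunLike.congr_fun hU.2 x
  have hPξ : ∀ a : Fin d, P (ContinuousLinearMap.adjoint U (φ a))
      = ContinuousLinearMap.adjoint U (φ a) := by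
    intro a
    refine ext_inner_right ℝ fun y => ?_
    rw [hPsa, ContinuousLinearMap.adjoint_inner_left, ContinuousLinearMap.adjoint_inner_left,
      hUPa]
  -- measurable modification of Z
  set Z' : Ω → PiLp 2 H := hZ4.aestronglyMeasurable.mk Z with hZ'def
  have hZ'sm : StronglyMeasurable Z' := hZ4.aestronglyMeasurable.stronglyMeasurable_mk
  have hZae : Z =ᵐ[μ] Z' := hZ4.aestronglyMeasurable.ae_eq_mk
  have hcsm : ∀ t : Fin p, StronglyMeasurable fun ω => Z' ω t := fun t =>
    Continuous.comp_stronglyMeasurable (PiLp.proj (𝕜 := ℝ) (p := 2) (β := H) t).continuous hZ'sm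
  have hcomp : ∀ t : Fin p, Measurable fun ω => Z' ω t := fun t => (hcsm t).measurable
  have hindep' : iIndepFun (fun t ω => Z' ω t) μ :=
    my_iIndepFun_ae_eq hindep fun t => hZae.mono fun ω h => by simp only [h]
  have hZ'4 : MemLp Z' 4 μ := hZ4.ae_eq hZae
  have hZ'int : Integrable Z' μ := (hZ'4.mono_exponent (by norm_num)).integrable le_rfl
  have hZ'mean : ∫ ω, Z' ω ∂μ = 0 := by
    rw [← integral_congr_ae hZae]; exact hmean
  have hQuad : Integrable (fun ω => ‖Z' ω‖ ^ (4 : ℕ)) μ := by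
    have h1 := hZ'4.integrable_norm_rpow (by norm_num) (by norm_num)
    have h2 : (4 : ℝ≥0∞).toReal = (4 : ℝ) := by norm_num
    rw [h2] at h1
    apply h1.congr
    filter_upwards with ω
    rw [← Real.rpow_natCast]
    norm_num
  have hmean_w : ∀ w : PiLp 2 H, ∫ ω, ⟪Z' ω, w⟫ ∂μ = 0 := by
    intro w
    have h1 : ∫ ω, ⟪w, Z' ω⟫ ∂μ = ⟪w, ∫ ω, Z' ω ∂μ⟫ := integral_inner hZ'int w
    rw [hZ'mean, inner_zero_right] at h1
    rw [← h1]
    exact integral_congr_ae (Eventually.of_forall fun ω => real_inner_comm _ _)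
  have hmean_c : ∀ (t : Fin p) (v : H t), ∫ ω, ⟪Z' ω t, v⟫ ∂μ = 0 := by
    intro t v
    rw [← hmean_w (esingle t v)]
    exact integral_congr_ae (Eventually.of_forall fun ω => (my_inner_single' t v (Z' ω)).symm)
  have hstd' : ∀ x y : PiLp 2 H, ⟪x, P y⟫ = ∫ ω, ⟪x, Z' ω⟫ * ⟪Z' ω, y⟫ ∂μ := fun x y =>
    (hstd x y).trans (integral_congr_ae (hZae.mono fun ω h => by simp only [h]))
  have hinmeas : ∀ (t : Fin p) (v : H t), Measurable fun x : H t => ⟪x, v⟫ :=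
    fun t v => (continuous_id.inner continuous_const).measurable
  have hsm_c : ∀ (t : Fin p) (v : H t), AEStronglyMeasurable (fun ω => ⟪Z' ω t, v⟫) μ :=
    fun t v => ((hcsm t).inner stronglyMeasurable_const).aestronglyMeasurable
  have hbnd : ∀ (t : Fin p) (v : H t) (ω : Ω), |⟪Z' ω t, v⟫| ≤ ‖Z' ω‖ * ‖v‖ := by
    intro t v ω
    refine (abs_real_inner_le_norm _ _).trans ?_
    exact mul_le_mul_of_nonneg_right (my_norm_apply_le _ _) (norm_nonneg _)
  have hi2c : ∀ (a b : Fin p) (w : H a) (v : H b),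
      Integrable (fun ω => ⟪Z' ω a, w⟫ * ⟪Z' ω b, v⟫) μ := by
    intro a b w v
    refine Integrable.mono' (((integrable_const (1 : ℝ)).add hQuad).const_mul (‖w‖ * ‖v‖))
      ((hsm_c a w).mul (hsm_c b v)) (Eventually.of_forall fun ω => ?_)
    have h1 := hbnd a w ω
    have h2 := hbnd b v ω
    have h3 : ‖Z' ω‖ ^ 2 ≤ 1 + ‖Z' ω‖ ^ 4 := by nlinarith [sq_nonneg (‖Z' ω‖ ^ 2 - 1)]
    rw [Real.norm_eq_abs, abs_mul]
    calc |⟪Z' ω a, w⟫| * |⟪Z' ω b, v⟫| ≤ (‖Z' ω‖ * ‖w‖) * (‖Z' ω‖ * ‖v‖) :=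
          mul_le_mul h1 h2 (abs_nonneg _) (by positivity)
      _ = ‖w‖ * ‖v‖ * ‖Z' ω‖ ^ 2 := by ring
      _ ≤ ‖w‖ * ‖v‖ * (1 + ‖Z' ω‖ ^ 4) := mul_le_mul_of_nonneg_left h3 (by positivity)
  have hi4c : ∀ (a b c e : Fin p) (w : H a) (x : H b) (y : H c) (v : H e),
      Integrable (fun ω => ⟪Z' ω a, w⟫ * ⟪Z' ω b, x⟫ * (⟪Z' ω c, y⟫ * ⟪Z' ω e, v⟫)) μ := by
    intro a b c e w x y v
    refine Integrable.mono' (hQuad.const_mul (‖w‖ * ‖x‖ * (‖y‖ * ‖v‖)))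
      (((hsm_c a w).mul (hsm_c b x)).mul ((hsm_c c y).mul (hsm_c e v)))
      (Eventually.of_forall fun ω => ?_)
    rw [Real.norm_eq_abs, abs_mul, abs_mul, abs_mul]
    calc |⟪Z' ω a, w⟫| * |⟪Z' ω b, x⟫| * (|⟪Z' ω c, y⟫| * |⟪Z' ω e, v⟫|)
        ≤ (‖Z' ω‖ * ‖w‖) * (‖Z' ω‖ * ‖x‖) * ((‖Z' ω‖ * ‖y‖) * (‖Z' ω‖ * ‖v‖)) := by
          gcongr <;> first
            | exact hbnd _ _ ω
            | positivity
      _ = ‖w‖ * ‖x‖ * (‖y‖ * ‖v‖) * ‖Z' ω‖ ^ 4 := by ring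
  -- the componentwise covariance identity
  have hcov : ∀ w : PiLp 2 H, P w = w → ∀ (t : Fin p) (v : H t),
      ∫ ω, ⟪Z' ω t, w t⟫ * ⟪Z' ω t, v⟫ ∂μ = ⟪w t, v⟫ := by
    intro w hw t v
    have hexp : ∀ ω, ⟪w, Z' ω⟫ * ⟪Z' ω, esingle t v⟫
        = ∑ r, ⟪Z' ω r, w r⟫ * ⟪Z' ω t, v⟫ := by
      intro ω
      rw [PiLp.inner_apply, my_inner_single', Finset.sum_mul]
      refine Finset.sum_congr rfl fun r _ => ?_
      rw [real_inner_comm (Z' ω r) (w r)]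
    have h0 : ⟪w t, v⟫ = ∫ ω, ⟪w, Z' ω⟫ * ⟪Z' ω, esingle t v⟫ ∂μ := by
      calc ⟪w t, v⟫ = ⟪w, esingle t v⟫ := (my_inner_single' t v w).symm
        _ = ⟪P w, esingle t v⟫ := by rw [hw]
        _ = ⟪w, P (esingle t v)⟫ := hPsa w _
        _ = ∫ ω, ⟪w, Z' ω⟫ * ⟪Z' ω, esingle t v⟫ ∂μ := hstd' _ _
    have hsum : ∫ ω, ⟪w, Z' ω⟫ * ⟪Z' ω, esingle t v⟫ ∂μ
        = ∫ ω, ⟪Z' ω t, w t⟫ * ⟪Z' ω t, v⟫ ∂μ := by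
      rw [integral_congr_ae (Eventually.of_forall hexp),
        integral_finset_sum _ (fun r _ => hi2c r t (w r) v)]
      rw [Finset.sum_eq_single_of_mem t (Finset.mem_univ t) (fun r _ hrt => by
        have hind : IndepFun (fun ω => ⟪Z' ω r, w r⟫) (fun ω => ⟪Z' ω t, v⟫) μ :=
          (hindep'.indepFun hrt).comp (hinmeas r (w r)) (hinmeas t v)
        rw [hind.integral_fun_mul_eq_mul_integral (hsm_c r (w r)) (hsm_c t v), hmean_c t v, mul_zero])]
    rw [← hsum, ← h0]
  -- PART 1
  have part1 : ∀ (k l : Fin p), k ≠ l → ∀ g : H l,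
      Mop (esingle l g) k
        = ⟪ContinuousLinearMap.adjoint U (φ j) l, g⟫ •
            ContinuousLinearMap.adjoint U (φ i) k
          + ⟪ContinuousLinearMap.adjoint U (φ i) l, g⟫ •
              ContinuousLinearMap.adjoint U (φ j) k := by
    intro k l hkl g
    refine ext_inner_left ℝ fun f => ?_
    have key : ⟪esingle k f, Mop (esingle l g)⟫
        = ⟪ContinuousLinearMap.adjoint U (φ i) k, f⟫ *
            ⟪ContinuousLinearMap.adjoint U (φ j) l, g⟫
          + ⟪ContinuousLinearMap.adjoint U (φ i) l, g⟫ *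
              ⟪ContinuousLinearMap.adjoint U (φ j) k, f⟫ := by
      rw [hMop]
      have hZZ : ∫ ω, ⟪U (Z ω), φ i⟫ * ⟪U (Z ω), φ j⟫ *
            (⟪Z ω, esingle k f⟫ * ⟪Z ω, esingle l g⟫) ∂μ
          = ∫ ω, (∑ r, ⟪Z' ω r, ContinuousLinearMap.adjoint U (φ i) r⟫) *
              (∑ s, ⟪Z' ω s, ContinuousLinearMap.adjoint U (φ j) s⟫) *
              (⟪Z' ω k, f⟫ * ⟪Z' ω l, g⟫) ∂μ := by
        refine integral_congr_ae (hZae.mono fun ω h => ?_)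
        beta_reduce
        rw [h]
        rw [← ContinuousLinearMap.adjoint_inner_right U (Z' ω) (φ i),
          ← ContinuousLinearMap.adjoint_inner_right U (Z' ω) (φ j)]
        rw [my_inner_single' k f (Z' ω), my_inner_single' l g (Z' ω)]
        rw [PiLp.inner_apply, PiLp.inner_apply]
      rw [hZZ]
      have hps : ∀ ω, (∑ r, ⟪Z' ω r, ContinuousLinearMap.adjoint U (φ i) r⟫) *
              (∑ s, ⟪Z' ω s, ContinuousLinearMap.adjoint U (φ j) s⟫) *
              (⟪Z' ω k, f⟫ * ⟪Z' ω l, g⟫)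
          = ∑ r, ∑ s, ⟪Z' ω r, ContinuousLinearMap.adjoint U (φ i) r⟫ *
              ⟪Z' ω s, ContinuousLinearMap.adjoint U (φ j) s⟫ *
              (⟪Z' ω k, f⟫ * ⟪Z' ω l, g⟫) := by
        intro ω
        rw [Finset.sum_mul_sum, Finset.sum_mul]
        refine Finset.sum_congr rfl fun r _ => ?_
        rw [Finset.sum_mul]
      rw [integral_congr_ae (Eventually.of_forall hps)]
      rw [integral_finset_sum _ (fun r _ => integrable_finset_sum _
        (fun s _ => hi4c r s k l _ _ f g))]
      rw [Finset.sum_congr rfl (fun r _ => integral_finset_sum _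
        (fun s _ => hi4c r s k l _ _ f g))]
      rw [Finset.sum_congr rfl (fun r _ => Finset.sum_congr rfl (fun s _ =>
        term_eval Z' hcomp hindep' hmean_c hkl f g (ContinuousLinearMap.adjoint U (φ i))
          (ContinuousLinearMap.adjoint U (φ j)) r s))]
      simp only [Finset.sum_add_distrib]
      rw [my_sum_sum_ite k l, my_sum_sum_ite l k]
      rw [hcov _ (hPξ i) k f, hcov _ (hPξ j) l g, hcov _ (hPξ i) l g, hcov _ (hPξ j) k f]
    rw [← my_inner_single k f (Mop (esingle l g)), key, inner_add_right,
      real_inner_smul_right, real_inner_smul_right,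
      real_inner_comm (ContinuousLinearMap.adjoint U (φ i) k) f,
      real_inner_comm (ContinuousLinearMap.adjoint U (φ j) k) f]
    ring
  refine ⟨fun k l hkl g => part1 k l hkl g, ?_⟩
  -- PART 2
  set EB : PiLp 2 H →L[ℝ] PiLp 2 H :=
    MopFull - (if i = j then (1 : ℝ) else 0) • P - (innerSL ℝ (φ j)).smulRight (φ i)
      - (innerSL ℝ (φ i)).smulRight (φ j) with hEB
  have hEBapp : ∀ x, EB x = MopFull x - (if i = j then (1 : ℝ) else 0) • P x
      - ⟪φ j, x⟫ • φ i - ⟪φ i, x⟫ • φ j := by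
    intro x
    rw [hEB]
    by_cases h : i = j <;>
      simp [h, ContinuousLinearMap.sub_apply, ContinuousLinearMap.smul_apply,
        ContinuousLinearMap.smulRight_apply, innerSL_apply_apply]
  have hEBinner : ∀ v x, ⟪v, EB x⟫ = ⟪v, MopFull x⟫
      - (if i = j then (1 : ℝ) else 0) * ⟪v, P x⟫
      - ⟪φ j, x⟫ * ⟪v, φ i⟫ - ⟪φ i, x⟫ * ⟪v, φ j⟫ := by
    intro v x
    rw [hEBapp, inner_sub_right, inner_sub_right, inner_sub_right,
      real_inner_smul_right, real_inner_smul_right, real_inner_smul_right]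
  have hMF : ∀ v x, ⟪P v, MopFull (P x)⟫ = ⟪v, MopFull x⟫ := by
    intro v x
    rw [hMopFull, hMopFull]
    refine integral_congr_ae (Eventually.of_forall fun ω => ?_)
    beta_reduce
    have h1 : ⟪U (Z ω), P v⟫ = ⟪U (Z ω), v⟫ := by rw [← hPsa, hPU]
    have h2 : ⟪U (Z ω), P x⟫ = ⟪U (Z ω), x⟫ := by rw [← hPsa, hPU]
    rw [h1, h2]
  have hEBP : ∀ x, P (EB (P x)) = EB x := by
    intro x
    refine ext_inner_left ℝ fun v => ?_
    rw [← hPsa v (EB (P x))]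
    rw [hEBinner, hEBinner]
    have e1 : ⟪P v, MopFull (P x)⟫ = ⟪v, MopFull x⟫ := hMF v x
    have e2 : ⟪P v, P (P x)⟫ = ⟪v, P x⟫ := by rw [hPP x, hPsa, hPP x]
    have e3 : ⟪φ j, P x⟫ = ⟪φ j, x⟫ := by rw [← hPsa, hPφ]
    have e4 : ⟪φ i, P x⟫ = ⟪φ i, x⟫ := by rw [← hPsa, hPφ]
    have e5 : ⟪P v, φ i⟫ = ⟪v, φ i⟫ := by rw [hPsa, hPφ]
    have e6 : ⟪P v, φ j⟫ = ⟪v, φ j⟫ := by rw [hPsa, hPφ]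
    rw [e1, e2, e3, e4, e5, e6]
  refine ⟨(ContinuousLinearMap.adjoint U).comp (EB.comp U), ?_, ?_⟩
  · -- off-diagonal entries of D vanish
    intro k l hkl g
    refine ext_inner_left ℝ fun f => ?_
    rw [inner_zero_right]
    rw [← my_inner_single k f _]
    simp only [ContinuousLinearMap.comp_apply]
    rw [ContinuousLinearMap.adjoint_inner_right]
    rw [hEBinner]
    have hA : ⟪U (esingle k f), MopFull (U (esingle l g))⟫
        = ⟪ContinuousLinearMap.adjoint U (φ j) l, g⟫ *
            ⟪f, ContinuousLinearMap.adjoint U (φ i) k⟫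
          + ⟪ContinuousLinearMap.adjoint U (φ i) l, g⟫ *
              ⟪f, ContinuousLinearMap.adjoint U (φ j) k⟫ := by
      have h1 : ⟪U (esingle k f), MopFull (U (esingle l g))⟫
          = ⟪esingle k f, Mop (esingle l g)⟫ := by
        rw [hMopFull, hMop]
        refine integral_congr_ae (Eventually.of_forall fun ω => ?_)
        beta_reduce
        have h2 : ∀ (t : Fin p) (v : H t),
            ⟪U (Z ω), U (esingle t v)⟫ = ⟪Z ω, esingle t v⟫ := by
          intro t v
          rw [← ContinuousLinearMap.adjoint_inner_left, hadU, hPM _ (hZM ω)]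
        rw [h2 k f, h2 l g]
      rw [h1, my_inner_single k f _, part1 k l hkl g, inner_add_right,
        real_inner_smul_right, real_inner_smul_right]
    have hB : ⟪U (esingle k f), P (U (esingle l g))⟫ = 0 := by
      rw [hPU]
      rw [← ContinuousLinearMap.adjoint_inner_left, hadU]
      rw [hPsa, hstd']
      have h3 : ∀ ω, ⟪esingle k f, Z' ω⟫ * ⟪Z' ω, esingle l g⟫
          = ⟪Z' ω k, f⟫ * ⟪Z' ω l, g⟫ := by
        intro ω
        rw [my_inner_single, my_inner_single', real_inner_comm (Z' ω k) f]
      rw [integral_congr_ae (Eventually.of_forall h3)]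
      have hind : IndepFun (fun ω => ⟪Z' ω k, f⟫) (fun ω => ⟪Z' ω l, g⟫) μ :=
        (hindep'.indepFun hkl).comp (hinmeas k f) (hinmeas l g)
      rw [hind.integral_fun_mul_eq_mul_integral (hsm_c k f) (hsm_c l g), hmean_c k f, zero_mul]
    have hC1 : ⟪φ j, U (esingle l g)⟫ = ⟪ContinuousLinearMap.adjoint U (φ j) l, g⟫ := by
      rw [← ContinuousLinearMap.adjoint_inner_left, my_inner_single']
    have hC2 : ⟪φ i, U (esingle l g)⟫ = ⟪ContinuousLinearMap.adjoint U (φ i) l, g⟫ := by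
      rw [← ContinuousLinearMap.adjoint_inner_left, my_inner_single']
    have hD1 : ⟪U (esingle k f), φ i⟫ = ⟪f, ContinuousLinearMap.adjoint U (φ i) k⟫ := by
      rw [← ContinuousLinearMap.adjoint_inner_right, my_inner_single]
    have hD2 : ⟪U (esingle k f), φ j⟫ = ⟪f, ContinuousLinearMap.adjoint U (φ j) k⟫ := by
      rw [← ContinuousLinearMap.adjoint_inner_right, my_inner_single]
    rw [hA, hB, hC1, hC2, hD1, hD2]
    ring
  · -- the operator identity
    refine ContinuousLinearMap.ext fun x => ?_
    simp only [ContinuousLinearMap.comp_apply]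
    rw [hUUad, hUUad, hEBP]
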